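/- Let S = {(U_i, V_i)}_{i=1}^N be i.i.d. bivariate random variables on [0,1]² with uniform marginals, joint CDF F, and joint density f bounded above by f_max < ∞. Then E[|Pareto(S)|] ≤ N f_max ∫_0^1 ∫_0^1 (u + v − F(u, v))^{N−1} du dv. -/

import Mathlib

open MeasureTheory ProbabilityTheory Set intervalIntegral

/-- A point indexed by `i` is maximal (Pareto-optimal) within the indexed family `p`. -/
def IsParetoPoint {N : ℕ} (p : Fin N → ℝ × ℝ) (i : Fin N) : Prop :=
  ∀ j : Fin N, (p j).2 > (p i).2 → (p i).1 > (p j).1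

/-- The number of Pareto-optimal points of the indexed family `p`. -/
noncomputable def paretoCard {N : ℕ} (p : Fin N → ℝ × ℝ) : ℕ :=
  Set.ncard {i : Fin N | IsParetoPoint p i}

/-- For i.i.d. samples `(U_i, V_i)_{i=1}^N` on `[0,1]²` with uniform marginals, joint
CDF `F`, and joint density `f` bounded above by `f_max`, the expected size of the
Pareto set is at most `N f_max ∫₀¹∫₀¹ (u + v - F(u,v))^{N-1} du dv`. -/
theorem expected_pareto_card_upper_bound
    {Ω : Type*} [MeasurableSpace Ω] (μ : Measure Ω) [IsProbabilityMeasure μ]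
    {N : ℕ} (hN : 0 < N)
    (W : Fin N → Ω → ℝ × ℝ) (hWmeas : ∀ i, Measurable (W i))
    (hindep : iIndepFun W μ)
    (hident : ∀ i j, IdentDistrib (W i) (W j) μ μ)
    -- the samples take values in [0,1]²
    (hrange : ∀ i ω, W i ω ∈ Set.Icc (0:ℝ) 1 ×ˢ Set.Icc (0:ℝ) 1)
    -- uniform marginal distributions on [0,1]
    (hunifU : ∀ i, Measure.map (fun ω => (W i ω).1) μ = volume.restrict (Set.Icc (0:ℝ) 1))
    (hunifV : ∀ i, Measure.map (fun ω => (W i ω).2) μ = volume.restrict (Set.Icc (0:ℝ) 1))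
    -- F is the joint CDF of the common distribution
    (F : ℝ → ℝ → ℝ)
    (hF : ∀ u v, F u v = (μ {ω | (W ⟨0, hN⟩ ω).1 ≤ u ∧ (W ⟨0, hN⟩ ω).2 ≤ v}).toReal)
    -- f is the joint density of the common distribution
    (f : ℝ → ℝ → ℝ)
    (hf : Measure.map (W ⟨0, hN⟩) μ
      = volume.withDensity (fun p : ℝ × ℝ => ENNReal.ofReal (f p.1 p.2)))
    -- the density is bounded above by f_max
    (fmax : ℝ) (hfmax : ∀ u v, f u v ≤ fmax) :
    ∫ ω, (paretoCard (fun i => W i ω) : ℝ) ∂μ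
      ≤ (N : ℝ) * fmax * ∫ u in (0:ℝ)..1, ∫ v in (0:ℝ)..1,
          (u + v - F u v) ^ (N - 1) := by
  classical
  set i0 : Fin N := ⟨0, hN⟩ with hi0
  set W0 : Ω → ℝ × ℝ := W i0 with hW0
  set ν : Measure (ℝ × ℝ) := μ.map W0 with hν
  have hνprob : IsProbabilityMeasure ν := Measure.isProbabilityMeasure_map (hWmeas i0).aemeasurable
  -- the "dominated" region for a point x
  set B : ℝ × ℝ → Set (ℝ × ℝ) := fun x => {w | w.2 ≤ x.2} ∪ {w | w.1 < x.1} with hB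
  have hBmeas : ∀ x, MeasurableSet (B x) := by
    intro x
    exact ((measurableSet_le measurable_snd measurable_const).union
      (measurableSet_lt measurable_fst measurable_const))
  set g : ℝ × ℝ → ENNReal := fun x => ν (B x) with hg
  have hg1 : ∀ x, g x ≤ 1 := fun x => prob_le_one
  have hgmeas : Measurable g := by
    have hD : MeasurableSet {p : (ℝ × ℝ) × (ℝ × ℝ) | p.2.2 ≤ p.1.2 ∨ p.2.1 < p.1.1} := by
      exact (measurableSet_le (measurable_snd.comp measurable_snd)
          (measurable_snd.comp measurable_fst)).union
        (measurableSet_lt (measurable_fst.comp measurable_snd)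
          (measurable_fst.comp measurable_fst))
    exact measurable_measure_prodMk_left (ν := ν) hD
  set A : Fin N → Set Ω := fun i => {ω | IsParetoPoint (fun j => W j ω) i} with hA
  have hAmeas : ∀ i, MeasurableSet (A i) := by
    intro i
    have : A i = ⋂ j : Fin N, {ω | (W j ω).2 > (W i ω).2 → (W i ω).1 > (W j ω).1} := by
      ext ω; simp [hA, IsParetoPoint]
    rw [this]
    refine MeasurableSet.iInter fun j => ?_
    have h1 : MeasurableSet {ω | (W j ω).2 ≤ (W i ω).2} :=
      measurableSet_le (measurable_snd.comp (hWmeas j)) (measurable_snd.comp (hWmeas i))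
    have h2 : MeasurableSet {ω | (W j ω).1 < (W i ω).1} :=
      measurableSet_lt (measurable_fst.comp (hWmeas j)) (measurable_fst.comp (hWmeas i))
    have : {ω | (W j ω).2 > (W i ω).2 → (W i ω).1 > (W j ω).1}
        = {ω | (W j ω).2 ≤ (W i ω).2} ∪ {ω | (W j ω).1 < (W i ω).1} := by
      ext ω; simp [imp_iff_not_or, not_lt]
    rw [this]; exact h1.union h2
  -- key independence step
  have hBiff : ∀ (x w : ℝ × ℝ), (w.2 > x.2 → x.1 > w.1) ↔ w ∈ B x := by
    intro x w
    simp only [hB, Set.mem_union, Set.mem_setOf_eq]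
    constructor
    · intro h
      rcases le_or_gt w.2 x.2 with h' | h'
      · exact Or.inl h'
      · exact Or.inr (h h')
    · rintro (h | h) h'
      · exact absurd h' (not_lt.mpr h)
      · exact h
  have hAi : ∀ i, μ (A i) = ∫⁻ x, g x ^ (N - 1) ∂ν := by
    intro i
    set S : Finset (Fin N) := {i}ᶜ with hS
    have hScard : S.card = N - 1 := by
      simp [hS, Finset.card_compl]
    set YS : Ω → (↥S → ℝ × ℝ) := fun ω j => W j ω with hYS
    have hYSmeas : Measurable YS := measurable_pi_lambda _ (fun j => hWmeas j)
    have hST : Disjoint S ({i} : Finset (Fin N)) := by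
      simp [hS, Finset.disjoint_singleton_right]
    have hInd0 : IndepFun YS (fun ω (j : ↥({i} : Finset (Fin N))) => W j ω) μ :=
      hindep.indepFun_finset S {i} hST hWmeas
    have hInd : IndepFun YS (W i) μ := by
      have hev : Measurable fun q : ↥({i} : Finset (Fin N)) → ℝ × ℝ =>
          q ⟨i, Finset.mem_singleton_self i⟩ := measurable_pi_apply _
      exact hInd0.comp measurable_id hev
    set T' : Set ((↥S → ℝ × ℝ) × (ℝ × ℝ)) :=
      {qx | ∀ j : ↥S, (qx.1 j).2 > qx.2.2 → qx.2.1 > (qx.1 j).1} with hT'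
    have hT'eq : T' = ⋂ j : ↥S,
        ({qx : (↥S → ℝ × ℝ) × (ℝ × ℝ) | (qx.1 j).2 ≤ qx.2.2}
          ∪ {qx | (qx.1 j).1 < qx.2.1}) := by
      ext qx
      simp only [hT', Set.mem_iInter, Set.mem_setOf_eq, Set.mem_union]
      refine forall_congr' (fun j => ?_)
      rw [hBiff qx.2 (qx.1 j)]
      simp [hB]
    have hT'meas : MeasurableSet T' := by
      rw [hT'eq]
      refine MeasurableSet.iInter fun j => ?_
      exact (measurableSet_le
          ((measurable_snd.comp ((measurable_pi_apply j).comp measurable_fst)))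
          (measurable_snd.comp measurable_snd)).union
        (measurableSet_lt
          ((measurable_fst.comp ((measurable_pi_apply j).comp measurable_fst)))
          (measurable_fst.comp measurable_snd))
    have hpre : (fun ω => (YS ω, W i ω)) ⁻¹' T' = A i := by
      ext ω
      simp only [Set.mem_preimage, hT', Set.mem_setOf_eq, hA, IsParetoPoint, hYS]
      constructor
      · intro h j hj
        by_cases hji : j = i
        · subst hji; exact absurd hj (lt_irrefl _)
        · exact h ⟨j, by simp [hS, hji]⟩ hj
      · intro h j hj
        exact h j hj
    have hmap : μ.map (fun ω => (YS ω, W i ω)) = (μ.map YS).prod (μ.map (W i)) :=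
      (indepFun_iff_map_prod_eq_prod_map_map hYSmeas.aemeasurable
        (hWmeas i).aemeasurable).mp hInd
    have hinner : ∀ x : ℝ × ℝ,
        (μ.map YS) {q : ↥S → ℝ × ℝ | (q, x) ∈ T'} = g x ^ (N - 1) := by
      intro x
      have hqset : {q : ↥S → ℝ × ℝ | (q, x) ∈ T'} = ⋂ j : ↥S, (fun q => q j) ⁻¹' B x := by
        ext q
        simp only [hT', Set.mem_setOf_eq, Set.mem_iInter, Set.mem_preimage]
        exact forall_congr' (fun j => hBiff x (q j))
      have hqmeas : MeasurableSet (⋂ j : ↥S, (fun q : ↥S → ℝ × ℝ => q j) ⁻¹' B x) :=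
        MeasurableSet.iInter fun j => (measurable_pi_apply j) (hBmeas x)
      rw [hqset, Measure.map_apply hYSmeas hqmeas]
      have hpre2 : YS ⁻¹' (⋂ j : ↥S, (fun q : ↥S → ℝ × ℝ => q j) ⁻¹' B x)
          = ⋂ j ∈ S, W j ⁻¹' B x := by
        ext ω
        simp only [Set.mem_preimage, Set.mem_iInter, hYS]
        exact ⟨fun h j hj => h ⟨j, hj⟩, fun h j => h j j.2⟩
      rw [hpre2, hindep.measure_inter_preimage_eq_mul S
        (sets := fun _ => B x) (fun _ _ => hBmeas x)]
      have : ∀ j ∈ S, μ (W j ⁻¹' B x) = g x := by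
        intro j _
        rw [hg, hν, ← (hident j i0).map_eq]
        exact (Measure.map_apply (hWmeas j) (hBmeas x)).symm
      rw [Finset.prod_congr rfl this, Finset.prod_const, hScard]
    calc μ (A i) = μ.map (fun ω => (YS ω, W i ω)) T' := by
          rw [Measure.map_apply (hYSmeas.prodMk (hWmeas i)) hT'meas, hpre]
      _ = (μ.map YS).prod (μ.map (W i)) T' := by rw [hmap]
      _ = ∫⁻ x, (μ.map YS) {q | (q, x) ∈ T'} ∂(μ.map (W i)) :=
          Measure.prod_apply_symm hT'meas
      _ = ∫⁻ x, g x ^ (N - 1) ∂ν := by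
          rw [(hident i i0).map_eq]
          exact lintegral_congr hinner
  -- expectation as sum
  have hLHS : ∫ ω, (paretoCard (fun i => W i ω) : ℝ) ∂μ
      = (N : ℝ) * (∫⁻ x, g x ^ (N - 1) ∂ν).toReal := by
    have hcard : ∀ ω, (paretoCard (fun j => W j ω) : ℝ)
        = ∑ i : Fin N, (A i).indicator (fun _ => (1:ℝ)) ω := by
      intro ω
      rw [paretoCard, Set.ncard_eq_toFinset_card', Set.toFinset_setOf, Finset.card_filter]
      push_cast
      refine Finset.sum_congr rfl (fun i _ => ?_)
      by_cases h : IsParetoPoint (fun j => W j ω) i <;>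
        simp [Set.indicator_apply, h, hA, Set.mem_setOf_eq]
    calc ∫ ω, (paretoCard (fun i => W i ω) : ℝ) ∂μ
        = ∫ ω, ∑ i : Fin N, (A i).indicator (fun _ => (1:ℝ)) ω ∂μ := by
          exact integral_congr_ae (Filter.Eventually.of_forall hcard)
      _ = ∑ i : Fin N, ∫ ω, (A i).indicator (fun _ => (1:ℝ)) ω ∂μ := by
          refine integral_finset_sum _ (fun i _ => ?_)
          exact (integrable_indicator_iff (hAmeas i)).mpr
            ((integrableOn_const_iff (C := (1:ℝ))).mpr (Or.inr (measure_lt_top μ _)))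
      _ = ∑ i : Fin N, (μ (A i)).toReal := by
          refine Finset.sum_congr rfl (fun i _ => ?_)
          rw [integral_indicator_const _ (hAmeas i), smul_eq_mul, mul_one]; rfl
      _ = (N : ℝ) * (∫⁻ x, g x ^ (N - 1) ∂ν).toReal := by
          simp only [hAi]
          rw [Finset.sum_const, Finset.card_univ, Fintype.card_fin, nsmul_eq_mul]
  -- bounding step
  have hbound : (∫⁻ x, g x ^ (N - 1) ∂ν).toReal
      ≤ fmax * ∫ u in (0:ℝ)..1, ∫ v in (0:ℝ)..1, (u + v - F u v) ^ (N - 1) := by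
    set Q : Set (ℝ × ℝ) := Set.Icc (0:ℝ) 1 ×ˢ Set.Icc (0:ℝ) 1 with hQ
    have hQmeas : MeasurableSet Q := measurableSet_Icc.prod measurableSet_Icc
    have hQvol : volume Q = 1 := by
      rw [hQ]
      rw [Measure.volume_eq_prod, Measure.prod_prod, Real.volume_Icc]
      norm_num
    have hνQc : ν Qᶜ = 0 := by
      rw [hν, Measure.map_apply (hWmeas i0) hQmeas.compl]
      have : W0 ⁻¹' Qᶜ = ∅ := by
        ext ω
        simp only [Set.mem_preimage, Set.mem_compl_iff, Set.mem_empty_iff_false, iff_false,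
          not_not]
        exact hrange i0 ω
      rw [this, measure_empty]
    -- ν is dominated by fmax • volume
    have hle : ν ≤ (ENNReal.ofReal fmax) • (volume : Measure (ℝ × ℝ)) := by
      refine Measure.le_iff.mpr fun s hs => ?_
      have hf' : Measure.map W0 μ
          = volume.withDensity (fun p : ℝ × ℝ => ENNReal.ofReal (f p.1 p.2)) := hf
      show (Measure.map W0 μ) s ≤ _
      rw [hf', withDensity_apply _ hs, Measure.smul_apply, smul_eq_mul]
      calc ∫⁻ a in s, ENNReal.ofReal (f a.1 a.2) ∂volume
          ≤ ∫⁻ _ in s, ENNReal.ofReal fmax ∂volume :=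
            lintegral_mono fun a => ENNReal.ofReal_le_ofReal (hfmax _ _)
        _ = ENNReal.ofReal fmax * volume s := by rw [setLIntegral_const]
    have hfmax0 : 0 ≤ fmax := by
      by_contra hneg
      push_neg at hneg
      have h1 : ν Set.univ = 1 := measure_univ
      have h2 : ν Set.univ ≤ (ENNReal.ofReal fmax) • (volume : Measure (ℝ × ℝ)) Set.univ :=
        hle _ -- Measure.le_iff' ?
      rw [h1] at h2
      rw [ENNReal.ofReal_eq_zero.mpr hneg.le] at h2
      simp at h2
    set L : ENNReal := ∫⁻ x in Q, g x ^ (N - 1) ∂volume with hL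
    have hpow1 : ∀ x, g x ^ (N - 1) ≤ 1 := fun x => pow_le_one' (hg1 x) _
    have hLle : L ≤ 1 := by
      calc L ≤ ∫⁻ _ in Q, 1 ∂volume := lintegral_mono fun x => hpow1 x
        _ = volume Q := by rw [setLIntegral_const, one_mul]
        _ = 1 := hQvol
    have hLfin : L ≠ ⊤ := (lt_of_le_of_lt hLle ENNReal.one_lt_top).ne
    -- step 1 : pass to Q and to Lebesgue
    have hstep1 : ∫⁻ x, g x ^ (N - 1) ∂ν ≤ ENNReal.ofReal fmax * L := by
      have hsplit : ∫⁻ x, g x ^ (N - 1) ∂ν = ∫⁻ x in Q, g x ^ (N - 1) ∂ν := by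
        rw [← lintegral_add_compl (fun x => g x ^ (N - 1)) hQmeas]
        have : ν.restrict Qᶜ = 0 := Measure.restrict_eq_zero.mpr hνQc
        rw [this, lintegral_zero_measure, add_zero]
      rw [hsplit]
      calc ∫⁻ x in Q, g x ^ (N - 1) ∂ν
          ≤ ∫⁻ x in Q, g x ^ (N - 1) ∂((ENNReal.ofReal fmax) • (volume : Measure (ℝ × ℝ))) :=
            lintegral_mono' (Measure.restrict_mono le_rfl hle) le_rfl
        _ = ENNReal.ofReal fmax * L := by
            rw [Measure.restrict_smul, lintegral_smul_measure, smul_eq_mul]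
    -- identify the real-valued integral
    have hgF : ∀ x ∈ Q, (g x).toReal = x.1 + x.2 - F x.1 x.2 := by
      intro x hx
      obtain ⟨⟨hu0, hu1⟩, hv0, hv1⟩ := hx
      set u := x.1
      set v := x.2
      set C : Set (ℝ × ℝ) := {w | w.2 ≤ v} with hC
      set D : Set (ℝ × ℝ) := {w | w.1 < u} with hD
      have hCmeas : MeasurableSet C := measurableSet_le measurable_snd measurable_const
      have hDmeas : MeasurableSet D := measurableSet_lt measurable_fst measurable_const
      have hνC : ν C = ENNReal.ofReal v := by
        have : W0 ⁻¹' C = (fun ω => (W0 ω).2) ⁻¹' Set.Iic v := rfl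
        rw [hν, Measure.map_apply (hWmeas i0) hCmeas, this,
          ← Measure.map_apply (hWmeas i0).snd measurableSet_Iic, hunifV i0,
          Measure.restrict_apply measurableSet_Iic]
        have : Set.Iic v ∩ Set.Icc (0:ℝ) 1 = Set.Icc 0 v := by
          ext w
          simp only [Set.mem_inter_iff, Set.mem_Iic, Set.mem_Icc]
          exact ⟨fun ⟨h1, h2, _⟩ => ⟨h2, h1⟩, fun ⟨h1, h2⟩ => ⟨h2, h1, h2.trans hv1⟩⟩
        rw [this, Real.volume_Icc, sub_zero]
      have hνD : ν D = ENNReal.ofReal u := by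
        have : W0 ⁻¹' D = (fun ω => (W0 ω).1) ⁻¹' Set.Iio u := rfl
        rw [hν, Measure.map_apply (hWmeas i0) hDmeas, this,
          ← Measure.map_apply (hWmeas i0).fst measurableSet_Iio, hunifU i0,
          Measure.restrict_apply measurableSet_Iio]
        have : Set.Iio u ∩ Set.Icc (0:ℝ) 1 = Set.Ico 0 u := by
          ext w
          simp only [Set.mem_inter_iff, Set.mem_Iio, Set.mem_Icc, Set.mem_Ico]
          exact ⟨fun ⟨h1, h2, _⟩ => ⟨h2, h1⟩, fun ⟨h1, h2⟩ => ⟨h2, h1, (h2.le.trans hu1)⟩⟩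
        rw [this, Real.volume_Ico, sub_zero]
      have hatom : μ {ω | (W0 ω).1 = u} = 0 := by
        have : {ω | (W0 ω).1 = u} = (fun ω => (W0 ω).1) ⁻¹' {u} := rfl
        rw [this, ← Measure.map_apply (hWmeas i0).fst (measurableSet_singleton u), hunifU i0,
          Measure.restrict_apply (measurableSet_singleton u)]
        exact measure_mono_null Set.inter_subset_left (Real.volume_singleton)
      have hνCD : (ν (C ∩ D)).toReal = F u v := by
        have h1 : ν (C ∩ D) = μ {ω | (W0 ω).1 < u ∧ (W0 ω).2 ≤ v} := by
          rw [hν, Measure.map_apply (hWmeas i0) (hCmeas.inter hDmeas)]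
          congr 1
          ext ω
          simp only [Set.mem_preimage, Set.mem_inter_iff, hC, hD, Set.mem_setOf_eq]
          tauto
        have h2 : μ {ω | (W0 ω).1 ≤ u ∧ (W0 ω).2 ≤ v}
            = μ {ω | (W0 ω).1 < u ∧ (W0 ω).2 ≤ v} := by
          refine le_antisymm ?_ (measure_mono fun ω h => ⟨h.1.le, h.2⟩)
          calc μ {ω | (W0 ω).1 ≤ u ∧ (W0 ω).2 ≤ v}
              ≤ μ ({ω | (W0 ω).1 < u ∧ (W0 ω).2 ≤ v} ∪ {ω | (W0 ω).1 = u}) := by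
                refine measure_mono fun ω h => ?_
                rcases lt_or_eq_of_le h.1 with h' | h'
                · exact Or.inl ⟨h', h.2⟩
                · exact Or.inr h'
            _ ≤ μ {ω | (W0 ω).1 < u ∧ (W0 ω).2 ≤ v} + μ {ω | (W0 ω).1 = u} :=
                measure_union_le _ _
            _ = μ {ω | (W0 ω).1 < u ∧ (W0 ω).2 ≤ v} := by rw [hatom, add_zero]
        rw [h1, ← h2, hF]
      have hunion : ν (B x) + ν (C ∩ D) = ν C + ν D := by
        have : B x = C ∪ D := rfl
        rw [this, measure_union_add_inter C hDmeas]
      have hfinB : ν (B x) ≠ ⊤ := measure_ne_top ν _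
      have hfinCD : ν (C ∩ D) ≠ ⊤ := measure_ne_top ν _
      have := congrArg ENNReal.toReal hunion
      rw [ENNReal.toReal_add hfinB hfinCD, ENNReal.toReal_add (by rw [hνC]; exact
        ENNReal.ofReal_ne_top) (by rw [hνD]; exact ENNReal.ofReal_ne_top), hνC, hνD,
        ENNReal.toReal_ofReal hv0, ENNReal.toReal_ofReal hu0, hνCD] at this
      have hgx : (g x).toReal = v + u - F u v := by
        rw [hg]
        linarith [this]
      rw [hgx]; ring
    -- measurable bounded real version
    set ψ : ℝ × ℝ → ℝ := fun x => ((g x).toReal) ^ (N - 1) with hψ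
    have hψmeas : Measurable ψ := (hgmeas.ennreal_toReal).pow_const _
    have hψbd : ∀ x, ‖ψ x‖ ≤ 1 := by
      intro x
      rw [Real.norm_eq_abs, abs_of_nonneg (by positivity)]
      refine pow_le_one₀ ENNReal.toReal_nonneg ?_
      exact ENNReal.toReal_le_of_le_ofReal zero_le_one (by simpa using hg1 x)
    have hLtoReal : L.toReal = ∫ x in Q, ψ x ∂volume := by
      rw [hL, ← integral_toReal ((hgmeas.pow_const _).aemeasurable)
        (Filter.Eventually.of_forall fun x => lt_of_le_of_lt (hpow1 x) ENNReal.one_lt_top)]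
      refine integral_congr_ae (Filter.Eventually.of_forall fun x => ?_)
      simp [hψ, ENNReal.toReal_pow]
    haveI : IsFiniteMeasure ((volume : Measure (ℝ × ℝ)).restrict Q) :=
      ⟨by rw [Measure.restrict_apply_univ, hQvol]; exact ENNReal.one_lt_top⟩
    have hψint : IntegrableOn ψ Q (volume : Measure (ℝ × ℝ)) :=
      ⟨hψmeas.aestronglyMeasurable,
        HasFiniteIntegral.of_bounded (C := 1) (Filter.Eventually.of_forall hψbd)⟩
    have hcongrQ : ∫ x in Q, ψ x ∂volume
        = ∫ x in Q, (x.1 + x.2 - F x.1 x.2) ^ (N - 1) ∂(volume : Measure (ℝ × ℝ)) := by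
      refine setIntegral_congr_fun hQmeas fun x hx => ?_
      rw [hψ]
      simp only
      rw [hgF x hx]
    have hiter : ∫ x in Q, (x.1 + x.2 - F x.1 x.2) ^ (N - 1) ∂(volume : Measure (ℝ × ℝ))
        = ∫ u in (0:ℝ)..1, ∫ v in (0:ℝ)..1, (u + v - F u v) ^ (N - 1) := by
      have hint : IntegrableOn (fun x : ℝ × ℝ => (x.1 + x.2 - F x.1 x.2) ^ (N - 1)) Q volume :=
        hψint.congr_fun (fun x hx => by rw [hψ]; simp only; rw [hgF x hx]) hQmeas
      rw [hQ, Measure.volume_eq_prod] at hint ⊢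
      rw [MeasureTheory.setIntegral_prod _ hint]
      rw [intervalIntegral.integral_of_le (zero_le_one' ℝ)]
      rw [← integral_Icc_eq_integral_Ioc]
      refine setIntegral_congr_fun measurableSet_Icc fun u _ => ?_
      rw [intervalIntegral.integral_of_le (zero_le_one' ℝ), ← integral_Icc_eq_integral_Ioc]
    calc (∫⁻ x, g x ^ (N - 1) ∂ν).toReal
        ≤ (ENNReal.ofReal fmax * L).toReal := by
          refine ENNReal.toReal_mono ?_ hstep1
          exact ENNReal.mul_ne_top ENNReal.ofReal_ne_top hLfin
      _ = fmax * L.toReal := by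
          rw [ENNReal.toReal_mul, ENNReal.toReal_ofReal hfmax0]
      _ = fmax * ∫ u in (0:ℝ)..1, ∫ v in (0:ℝ)..1, (u + v - F u v) ^ (N - 1) := by
          rw [hLtoReal, hcongrQ, hiter]
  rw [hLHS, mul_assoc]
  exact mul_le_mul_of_nonneg_left hbound (by positivity)
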